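/- For all real α and β, every m ≥ 2, every 0 ≤ k ≤ ⌊m/2⌋, and every q ∈ {H,I}^{m−2k}: (i) |U_{k,q,s}| = binom(m, 2k) for every Dyck path s ∈ 𝔇_k; (ii) whenever s₁, s₂ ∈ 𝔇_k are distinct Dyck paths such that s₂ is obtained from s₁ by exchanging the positions of one U step and one D step (a transposition move), then for every x ∈ U_{k,q,s₁} there is exactly one y ∈ U_{k,q,s₂} with P(x,y) > 0, and the projection chain M̄_{k,q} of the restriction of M to T_{k,q}, taken with respect to the partition {U_{k,q,s} : s ∈ 𝔇_k}, satisfies P̄_{k,q}(s₁, s₂) = 1/(4m²); (iii) P̄_{k,q}(s₁, s₂) = 0 for all distinct s₁, s₂ not related by a transposition move, and the stationary distribution of M̄_{k,q} is uniform on 𝔇_k. -/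

import Mathlib

open Finset

/-- The four symbols of a 2-Motzkin path: up-step `U`, two colors of
horizontal steps `H` and `I`, and down-step `D`. -/
inductive MSym : Type
  | U | H | I | D
  deriving DecidableEq

instance : Fintype MSym :=
  ⟨{MSym.U, MSym.H, MSym.I, MSym.D}, fun x => by cases x <;> simp⟩

/-- `symCount x a` is `|x|_a`, the number of occurrences of the symbol `a` in `x`. -/
def symCount {m : ℕ} (x : Fin m → MSym) (a : MSym) : ℕ :=
  (Finset.univ.filter (fun i => x i = a)).card

/-- the number of occurrences of `a` among the first `j+1` symbols of `x`. -/
def symCountPrefix {m : ℕ} (x : Fin m → MSym) (a : MSym) (j : Fin m) : ℕ :=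
  (Finset.univ.filter (fun i => i ≤ j ∧ x i = a)).card

/-- `x` is a 2-Motzkin path: no prefix has more `D`s than `U`s, and the
total number of `U`s equals the total number of `D`s. -/
def IsMotzkin2 {m : ℕ} (x : Fin m → MSym) : Prop :=
  (∀ j : Fin m, symCountPrefix x MSym.D j ≤ symCountPrefix x MSym.U j) ∧
    symCount x MSym.U = symCount x MSym.D

instance {m : ℕ} : DecidablePred (IsMotzkin2 (m := m)) := fun _ => by
  unfold IsMotzkin2; infer_instance

/-- `𝔐²_m` : the set of 2-Motzkin paths of length `m`. -/
abbrev Motzkin2 (m : ℕ) : Type := {x : Fin m → MSym // IsMotzkin2 x}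

/-- The energy `E(x) = α(|x|_U + |x|_H + 1) + β |x|_I`. -/
noncomputable def energy (α β : ℝ) {m : ℕ} (x : Fin m → MSym) : ℝ :=
  α * ((symCount x MSym.U : ℝ) + (symCount x MSym.H : ℝ) + 1) + β * (symCount x MSym.I : ℝ)

/-- pairs of consecutive positions `(i, i+1)`. -/
def adjPairs (m : ℕ) : Finset (Fin m × Fin m) :=
  Finset.univ.filter (fun p => (p.2 : ℕ) = (p.1 : ℕ) + 1)

/-- The string `x` with the symbols `a`, `b` placed at positions `i`, `j`. -/
def setTwo {m : ℕ} (x : Fin m → MSym) (i j : Fin m) (a b : MSym) : Fin m → MSym :=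
  Function.update (Function.update x i a) j b

def isUD (a : MSym) : Prop := a = MSym.U ∨ a = MSym.D
def isHI (a : MSym) : Prop := a = MSym.H ∨ a = MSym.I
instance : DecidablePred isUD := fun a => by unfold isUD; infer_instance
instance : DecidablePred isHI := fun a => by unfold isHI; infer_instance

/-- The probability of moving from `x` to a *different* string `y` in one step
of the chain `M`: with probability 1/4 each, one of the four kinds of moves is
proposed (a uniformly random choice of positions together with the indicated
coin flips), and an (automatically valid) proposal `y ≠ x` is accepted with
probability 1/2. -/
noncomputable def stepWeight (α β : ℝ) {m : ℕ} (x y : Fin m → MSym) : ℝ :=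
  -- move 1 : UD ↔ HH at a random pair of consecutive positions
  (1/4) * (1/((m : ℝ) - 1)) * (1/2) *
    (∑ p ∈ adjPairs m,
      ((if x p.1 = MSym.U ∧ x p.2 = MSym.D ∧ y = setTwo x p.1 p.2 MSym.H MSym.H then
          Real.exp (-α) / (1 + Real.exp (-α)) else 0) +
       (if x p.1 = MSym.H ∧ x p.2 = MSym.H ∧ y = setTwo x p.1 p.2 MSym.U MSym.D then
          1 / (1 + Real.exp (-α)) else 0)))
  -- move 2 : H ↔ I at a random position
  + (1/4) * (1/(m : ℝ)) * (1/2) *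
    (∑ i : Fin m,
      ((if x i = MSym.I ∧ y = Function.update x i MSym.H then
          Real.exp (-α) / (Real.exp (-α) + Real.exp (-β)) else 0) +
       (if x i = MSym.H ∧ y = Function.update x i MSym.I then
          Real.exp (-β) / (Real.exp (-α) + Real.exp (-β)) else 0)))
  -- move 3 : swap the symbols at two uniform random positions, both in {U, D}
  + (1/4) * (1/((m : ℝ) * (m : ℝ))) * (1/2) *
    (∑ p : Fin m × Fin m,
      (if isUD (x p.1) ∧ isUD (x p.2) ∧ y = setTwo x p.1 p.2 (x p.2) (x p.1) then
        (1 : ℝ) else 0))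
  -- move 4 : reverse an adjacent pair consisting of one of {U,D} and one of {H,I}
  + (1/4) * (1/((m : ℝ) - 1)) * (1/2) *
    (∑ p ∈ adjPairs m,
      (if ((isUD (x p.1) ∧ isHI (x p.2)) ∨ (isHI (x p.1) ∧ isUD (x p.2))) ∧
          y = setTwo x p.1 p.2 (x p.2) (x p.1) then (1 : ℝ) else 0))

/-- The transition matrix of the Markov chain `M` on `𝔐²_m`: off the diagonal
the probability of the corresponding accepted move; proposals that are rejected,
invalid, or coincide with the current state contribute to the holding
probability on the diagonal. -/
noncomputable def transP (α β : ℝ) (m : ℕ) : Matrix (Motzkin2 m) (Motzkin2 m) ℝ :=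
  fun x y =>
    if x = y then
      1 - ∑ z : Motzkin2 m, (if z = x then 0 else stepWeight α β x.1 z.1)
    else stepWeight α β x.1 y.1

/-- The Gibbs distribution `π(x) = e^{-E(x)}/Z` on `𝔐²_m`. -/
noncomputable def gibbs (α β : ℝ) (m : ℕ) (x : Motzkin2 m) : ℝ :=
  Real.exp (-(energy α β x.1)) / ∑ y : Motzkin2 m, Real.exp (-(energy α β y.1))

/-- The spectral gap `1 - |λ₁|` of a transition matrix: one minus the largest
absolute value of an eigenvalue different from `λ₀ = 1`. -/
noncomputable def spectralGap {n : Type*} [Fintype n] [DecidableEq n]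
    (P : Matrix n n ℝ) : ℝ :=
  1 - sSup {r : ℝ | ∃ μ : ℂ,
    μ ∈ spectrum ℂ (P.map (fun t => (t : ℂ))) ∧ μ ≠ 1 ∧ r = ‖μ‖}

/-- The subsequence of `H` and `I` symbols of `x`, encoded as a list of
Booleans with `H ↦ true` and `I ↦ false`. -/
def hiList {m : ℕ} (x : Fin m → MSym) : List Bool :=
  (List.ofFn x).filterMap (fun a =>
    match a with
    | MSym.H => some true
    | MSym.I => some false
    | _ => none)

/-- The skeleton `σ(x)` of `x`: the subsequence of `U` and `D` symbols of `x`,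
encoded as a list of Booleans with `U ↦ true` and `D ↦ false`. -/
def udList {m : ℕ} (x : Fin m → MSym) : List Bool :=
  (List.ofFn x).filterMap (fun a =>
    match a with
    | MSym.U => some true
    | MSym.D => some false
    | _ => none)

/-- A Dyck word (encoded with `U ↦ true`, `D ↦ false`): every prefix has at
least as many `U`s as `D`s, and in total there are as many `U`s as `D`s. -/
def IsDyck {n : ℕ} (s : Fin n → Bool) : Prop :=
  (∀ j : Fin n, (Finset.univ.filter (fun i => i ≤ j ∧ s i = false)).card ≤
      (Finset.univ.filter (fun i => i ≤ j ∧ s i = true)).card) ∧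
    (Finset.univ.filter (fun i => s i = true)).card =
      (Finset.univ.filter (fun i => s i = false)).card

instance {n : ℕ} : DecidablePred (IsDyck (n := n)) := fun _ => by
  unfold IsDyck; infer_instance

/-- `𝔇_k` : the set of Dyck paths with `k` up-steps. -/
abbrev Dyck (k : ℕ) : Type := {s : Fin (2 * k) → Bool // IsDyck s}

/-- The states of `T_{k,q}`, as a type: 2-Motzkin paths of length `m` with
`|x|_U = k` whose subsequence of `H` and `I` symbols is `q`. -/
abbrev TkqType (m k : ℕ) (q : Fin (m - 2 * k) → Bool) : Type :=
  {x : Motzkin2 m // symCount x.1 MSym.U = k ∧ hiList x.1 = List.ofFn q}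

/-- The restriction chain `M_{k,q}` of `M` to `T_{k,q}`. -/
noncomputable def restPkq (α β : ℝ) (m k : ℕ) (q : Fin (m - 2 * k) → Bool) :
    Matrix (TkqType m k q) (TkqType m k q) ℝ :=
  fun x y =>
    if x = y then 1 - ∑ z : TkqType m k q, (if z = x then 0 else transP α β m x.1 z.1)
    else transP α β m x.1 y.1

/-- The stationary distribution `π_{k,q}(x) = π(x)/π(T_{k,q})` of `M_{k,q}`. -/
noncomputable def gibbsKQ (α β : ℝ) (m k : ℕ) (q : Fin (m - 2 * k) → Bool)
    (x : TkqType m k q) : ℝ :=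
  gibbs α β m x.1 / ∑ y : TkqType m k q, gibbs α β m y.1

/-- `U_{k,q,s} = {x ∈ T_{k,q} : σ(x) = s}`. -/
def Uset (m k : ℕ) (q : Fin (m - 2 * k) → Bool) (s : Dyck k) :
    Finset (TkqType m k q) :=
  Finset.univ.filter (fun x => udList x.1.1 = List.ofFn s.1)

/-- The projection chain `M̄_{k,q}` of `M_{k,q}` with respect to the partition
of `T_{k,q}` into the sets `U_{k,q,s}`, `s ∈ 𝔇_k`. -/
noncomputable def projPkq (α β : ℝ) (m k : ℕ) (q : Fin (m - 2 * k) → Bool) :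
    Matrix (Dyck k) (Dyck k) ℝ :=
  fun s1 s2 =>
    (1 / ∑ x ∈ Uset m k q s1, gibbsKQ α β m k q x) *
      ∑ x ∈ Uset m k q s1, ∑ y ∈ Uset m k q s2,
        gibbsKQ α β m k q x * restPkq α β m k q x y


/-- `s2` is obtained from the Dyck path `s1` by a transposition move:
exchanging the positions of one `U` step and one `D` step. -/
def TranspMove {k : ℕ} (s1 s2 : Dyck k) : Prop :=
  ∃ i j : Fin (2 * k), s1.1 i = true ∧ s1.1 j = false ∧
    s2.1 = Function.update (Function.update s1.1 i false) j true


/-! ### Infrastructure -/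

def gUD : MSym → Option Bool := fun a =>
  match a with | MSym.U => some true | MSym.D => some false | _ => none
def gHI : MSym → Option Bool := fun a =>
  match a with | MSym.H => some true | MSym.I => some false | _ => none

lemma udList_eq {m : ℕ} (x : Fin m → MSym) :
    udList x = (List.ofFn x).filterMap gUD := by
  rfl

lemma hiList_eq {m : ℕ} (x : Fin m → MSym) :
    hiList x = (List.ofFn x).filterMap gHI := by
  rfl

lemma countP_ofFn {γ : Type*} {m : ℕ} (x : Fin m → γ) (pb : γ → Bool) :
    (List.ofFn x).countP pb = (univ.filter fun i => pb (x i)).card := by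
  rw [List.ofFn_eq_map, List.countP_map, List.countP_eq_length_filter]
  rw [Fin.univ_def]
  simp [Finset.filter, Multiset.filter_coe]
  rfl

lemma countP_take_ofFn {γ : Type*} {m : ℕ} (x : Fin m → γ) (pb : γ → Bool) (n : ℕ) :
    ((List.ofFn x).take n).countP pb
      = (univ.filter fun i : Fin m => (i : ℕ) < n ∧ pb (x i)).card := by
  induction n with
  | zero => simp
  | succ n ih =>
    rw [List.take_succ]
    rw [List.countP_append, ih]
    rcases lt_or_ge n m with h | h
    · have : (List.ofFn x)[n]? = some (x ⟨n, h⟩) := by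
        rw [List.getElem?_eq_getElem (by simpa using h)]
        simp [List.getElem_ofFn]
      rw [this]
      have hset : (univ.filter fun i : Fin m => (i : ℕ) < n + 1 ∧ pb (x i))
          = if pb (x ⟨n, h⟩) then insert ⟨n, h⟩ (univ.filter fun i : Fin m => (i : ℕ) < n ∧ pb (x i))
            else (univ.filter fun i : Fin m => (i : ℕ) < n ∧ pb (x i)) := by
      
        split_ifs with hp
        · ext i
          simp only [Finset.mem_insert, Finset.mem_filter, Finset.mem_univ, true_and]
          constructor
          · rintro ⟨h1, h2⟩
            rcases Nat.lt_succ_iff_lt_or_eq.mp h1 with h1 | h1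
            · exact Or.inr ⟨h1, h2⟩
            · exact Or.inl (Fin.ext h1)
          · rintro (rfl | ⟨h1, h2⟩)
            · exact ⟨Nat.lt_succ_self n, hp⟩
            · exact ⟨Nat.lt_succ_of_lt h1, h2⟩
        · ext i
          simp only [Finset.mem_filter, Finset.mem_univ, true_and]
          constructor
          · rintro ⟨h1, h2⟩
            rcases Nat.lt_succ_iff_lt_or_eq.mp h1 with h1 | h1
            · exact ⟨h1, h2⟩
            · exact absurd h2 (by rw [show i = ⟨n, h⟩ from Fin.ext h1]; simp [hp])
          · rintro ⟨h1, h2⟩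
            exact ⟨Nat.lt_succ_of_lt h1, h2⟩
      rw [hset]
      split_ifs with hp
      · rw [Finset.card_insert_of_notMem (by simp)]
        simp [hp]
      · simp [hp]
    · have : (List.ofFn x)[n]? = none := by
        rw [List.getElem?_eq_none]; simpa using h
      rw [this]
      have hset : (univ.filter fun i : Fin m => (i : ℕ) < n + 1 ∧ pb (x i))
          = (univ.filter fun i : Fin m => (i : ℕ) < n ∧ pb (x i)) := by
        apply Finset.filter_congr
        intro i _
        have : (i : ℕ) < n := lt_of_lt_of_le i.isLt h
        simp [this, Nat.lt_succ_of_lt this]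
      rw [hset]; simp

/-- generic: count of `c` in a filterMapped prefix equals a filter-card. -/
lemma count_filterMap_take {m : ℕ} (g : MSym → Option Bool) (c : Bool) (a : MSym)
    (hac : ∀ b : MSym, (g b == some c) = decide (b = a)) (x : Fin m → MSym) (p : ℕ) :
    (((List.ofFn x).take p).filterMap g).count c
      = (univ.filter fun i : Fin m => (i : ℕ) < p ∧ x i = a).card := by
  rw [List.count_filterMap]
  have : (fun b : MSym => g b == some c) = (fun b : MSym => decide (b = a)) := funext hac
  rw [this, countP_take_ofFn]
  congr 1
  apply Finset.filter_congr
  intro i _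
  simp

lemma count_filterMap_full {m : ℕ} (g : MSym → Option Bool) (c : Bool) (a : MSym)
    (hac : ∀ b : MSym, (g b == some c) = decide (b = a)) (x : Fin m → MSym) :
    ((List.ofFn x).filterMap g).count c = symCount x a := by
  have := count_filterMap_take g c a hac x m
  rw [List.take_of_length_le (by simp)] at this
  rw [this]
  unfold symCount
  congr 1
  apply Finset.filter_congr
  intro i _
  simp [i.isLt]

lemma gUD_true : ∀ b : MSym, (gUD b == some true) = decide (b = MSym.U) := by
  intro b; cases b <;> rfl
lemma gUD_false : ∀ b : MSym, (gUD b == some false) = decide (b = MSym.D) := by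
  intro b; cases b <;> rfl
lemma gHI_true : ∀ b : MSym, (gHI b == some true) = decide (b = MSym.H) := by
  intro b; cases b <;> rfl
lemma gHI_false : ∀ b : MSym, (gHI b == some false) = decide (b = MSym.I) := by
  intro b; cases b <;> rfl

lemma count_udList_true {m : ℕ} (x : Fin m → MSym) :
    (udList x).count true = symCount x MSym.U := by
  rw [udList_eq]; exact count_filterMap_full gUD true MSym.U gUD_true x
lemma count_udList_false {m : ℕ} (x : Fin m → MSym) :
    (udList x).count false = symCount x MSym.D := by
  rw [udList_eq]; exact count_filterMap_full gUD false MSym.D gUD_false x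
lemma count_hiList_true {m : ℕ} (x : Fin m → MSym) :
    (hiList x).count true = symCount x MSym.H := by
  rw [hiList_eq]; exact count_filterMap_full gHI true MSym.H gHI_true x
lemma count_hiList_false {m : ℕ} (x : Fin m → MSym) :
    (hiList x).count false = symCount x MSym.I := by
  rw [hiList_eq]; exact count_filterMap_full gHI false MSym.I gHI_false x

/-! prefix correspondences -/

lemma exists_take_filterMap {α β : Type*} (g : α → Option β) :
    ∀ (l : List α) (n : ℕ), ∃ p, (l.filterMap g).take n = (l.take p).filterMap g := by
  intro l
  induction l with
  | nil => intro n; exact ⟨0, by simp⟩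
  | cons a t ih =>
    intro n
    cases h : g a with
    | none =>
      obtain ⟨p, hp⟩ := ih n
      exact ⟨p + 1, by simp [List.filterMap_cons, h, hp]⟩
    | some b =>
      cases n with
      | zero => exact ⟨0, by simp⟩
      | succ n =>
        obtain ⟨p, hp⟩ := ih n
        exact ⟨p + 1, by simp [List.filterMap_cons, h, hp]⟩

lemma exists_filterMap_take {α β : Type*} (g : α → Option β) :
    ∀ (l : List α) (p : ℕ), ∃ n, (l.take p).filterMap g = (l.filterMap g).take n := by
  intro l
  induction l with
  | nil => intro p; exact ⟨0, by simp⟩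
  | cons a t ih =>
    intro p
    cases p with
    | zero => exact ⟨0, by simp⟩
    | succ p =>
      cases h : g a with
      | none =>
        obtain ⟨n, hn⟩ := ih p
        exact ⟨n, by simp [List.filterMap_cons, h, hn]⟩
      | some b =>
        obtain ⟨n, hn⟩ := ih p
        exact ⟨n + 1, by simp [List.filterMap_cons, h, hn]⟩

/-- Dyck-word property for boolean lists. -/
def DW (w : List Bool) : Prop :=
  (∀ n : ℕ, ((w.take n).count false) ≤ (w.take n).count true) ∧
    w.count true = w.count false

lemma count_take_ofFn_bool {n : ℕ} (s : Fin n → Bool) (c : Bool) (p : ℕ) :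
    ((List.ofFn s).take p).count c
      = (univ.filter fun i : Fin n => (i : ℕ) < p ∧ s i = c).card := by
  rw [List.count_eq_countP, countP_take_ofFn]
  congr 1
  apply Finset.filter_congr
  intro i _
  simp only [beq_iff_eq, decide_eq_true_eq]

lemma count_ofFn_bool {n : ℕ} (s : Fin n → Bool) (c : Bool) :
    (List.ofFn s).count c = (univ.filter fun i : Fin n => s i = c).card := by
  have := count_take_ofFn_bool s c n
  rw [List.take_of_length_le (by simp)] at this
  rw [this]
  congr 1
  apply Finset.filter_congr
  intro i _
  simp [i.isLt]

lemma isDyck_iff_DW {n : ℕ} (s : Fin n → Bool) : IsDyck s ↔ DW (List.ofFn s) := by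
  constructor
  · rintro ⟨h1, h2⟩
    constructor
    · intro p
      rw [count_take_ofFn_bool, count_take_ofFn_bool]
      rcases Nat.eq_zero_or_pos p with rfl | hp
      · simp
      rcases le_or_gt p n with hpn | hpn
      · have hj : p - 1 < n := by omega
        have hcong : ∀ c : Bool, (univ.filter fun i : Fin n => (i : ℕ) < p ∧ s i = c)
            = (univ.filter fun i : Fin n => i ≤ ⟨p - 1, hj⟩ ∧ s i = c) := by
          intro c
          apply Finset.filter_congr
          intro i _
          have : ((i : ℕ) < p) ↔ (i ≤ (⟨p - 1, hj⟩ : Fin n)) := by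
            rw [Fin.le_def]; simp; omega
          rw [this]
        rw [hcong, hcong]
        exact h1 ⟨p - 1, hj⟩
      · have hcong : ∀ c : Bool, (univ.filter fun i : Fin n => (i : ℕ) < p ∧ s i = c)
            = (univ.filter fun i : Fin n => s i = c) := by
          intro c
          apply Finset.filter_congr
          intro i _
          simp [lt_trans i.isLt hpn]
        rw [hcong, hcong, ← h2]
    · rw [count_ofFn_bool, count_ofFn_bool]
      exact h2
  · rintro ⟨h1, h2⟩
    constructor
    · intro j
      have := h1 ((j : ℕ) + 1)
      rw [count_take_ofFn_bool, count_take_ofFn_bool] at this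
      have hcong : ∀ c : Bool, (univ.filter fun i : Fin n => (i : ℕ) < (j : ℕ) + 1 ∧ s i = c)
          = (univ.filter fun i : Fin n => i ≤ j ∧ s i = c) := by
        intro c
        apply Finset.filter_congr
        intro i _
        have : ((i : ℕ) < (j : ℕ) + 1) ↔ i ≤ j := by
          rw [Fin.le_def]; omega
        rw [this]
      rw [hcong, hcong] at this
      exact this
    · rw [count_ofFn_bool, count_ofFn_bool] at h2
      exact h2

lemma isMotzkin2_iff_DW {m : ℕ} (x : Fin m → MSym) : IsMotzkin2 x ↔ DW (udList x) := by
  constructor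
  · rintro ⟨h1, h2⟩
    constructor
    · intro n'
      obtain ⟨p, hp⟩ := exists_take_filterMap gUD (List.ofFn x) n'
      rw [udList_eq, hp]
      rw [count_filterMap_take gUD false MSym.D gUD_false,
        count_filterMap_take gUD true MSym.U gUD_true]
      rcases Nat.eq_zero_or_pos p with rfl | hp0
      · simp
      rcases le_or_gt p m with hpm | hpm
      · have hj : p - 1 < m := by omega
        have hcong : ∀ a : MSym, (univ.filter fun i : Fin m => (i : ℕ) < p ∧ x i = a)
            = (univ.filter fun i : Fin m => i ≤ ⟨p - 1, hj⟩ ∧ x i = a) := by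
          intro a
          apply Finset.filter_congr
          intro i _
          have : ((i : ℕ) < p) ↔ (i ≤ (⟨p - 1, hj⟩ : Fin m)) := by
            rw [Fin.le_def]; simp; omega
          rw [this]
        rw [hcong, hcong]
        exact h1 ⟨p - 1, hj⟩
      · have hcong : ∀ a : MSym, (univ.filter fun i : Fin m => (i : ℕ) < p ∧ x i = a)
            = (univ.filter fun i : Fin m => x i = a) := by
          intro a
          apply Finset.filter_congr
          intro i _
          simp [lt_trans i.isLt hpm]
        rw [hcong, hcong]
        unfold symCount at h2
        omega
    · rw [count_udList_true, count_udList_false]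
      exact h2
  · rintro ⟨h1, h2⟩
    constructor
    · intro j
      obtain ⟨n, hn⟩ := exists_filterMap_take gUD (List.ofFn x) ((j : ℕ) + 1)
      have hD := count_filterMap_take gUD false MSym.D gUD_false x ((j : ℕ) + 1)
      have hU := count_filterMap_take gUD true MSym.U gUD_true x ((j : ℕ) + 1)
      rw [hn] at hD hU
      have hcong : ∀ a : MSym, (univ.filter fun i : Fin m => (i : ℕ) < (j : ℕ) + 1 ∧ x i = a)
          = (univ.filter fun i : Fin m => i ≤ j ∧ x i = a) := by
        intro a
        apply Finset.filter_congr
        intro i _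
        have : ((i : ℕ) < (j : ℕ) + 1) ↔ i ≤ j := by
          rw [Fin.le_def]; omega
        rw [this]
      rw [hcong] at hD hU
      unfold symCountPrefix
      rw [← hD, ← hU, ← udList_eq]
      exact h1 n
    · rw [← count_udList_true, ← count_udList_false]
      exact h2

/-! ### position/swap machinery -/

lemma filterMap_eq_map_filter {α β : Type*} (h : α → Option β) (d : β) :
    ∀ l : List α,
      l.filterMap h = (l.filter (fun a => (h a).isSome)).map (fun a => (h a).getD d) := by
  intro l
  induction l with
  | nil => simp
  | cons a t ih =>
    cases ha : h a with
    | none => simp [List.filterMap_cons, List.filter_cons, ha, ih]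
    | some b => simp [List.filterMap_cons, List.filter_cons, ha, ih]

/-- value extractor -/
def FF {m : ℕ} (x : Fin m → MSym) (t : Fin m) : Bool := (gUD (x t)).getD true
/-- the (sorted) list of positions of `U`/`D` symbols -/
def posL {m : ℕ} (x : Fin m → MSym) : List (Fin m) :=
  (List.finRange m).filter (fun t => (gUD (x t)).isSome)

lemma udList_map {m : ℕ} (x : Fin m → MSym) :
    udList x = (posL x).map (FF x) := by
  rw [udList_eq, List.ofFn_eq_map, List.filterMap_map,
    filterMap_eq_map_filter (gUD ∘ x) true]
  rfl

lemma gHI_eq_none {a : MSym} (h : (gUD a).isSome) : gHI a = none := by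
  cases a <;> simp_all [gUD, gHI]

lemma gUD_eq_none {a : MSym} (h : (gHI a).isSome) : gUD a = none := by
  cases a <;> simp_all [gUD, gHI]

lemma gUD_or_gHI (a : MSym) : (gUD a).isSome ∨ (gHI a).isSome := by
  cases a <;> simp [gUD, gHI]

lemma posL_swap {m : ℕ} (x : Fin m → MSym) (i j : Fin m)
    (hi : (gUD (x i)).isSome) (hj : (gUD (x j)).isSome) :
    posL (x ∘ Equiv.swap i j) = posL x := by
  unfold posL
  apply List.filter_congr
  intro t _
  rcases eq_or_ne t i with rfl | hti
  · simp [Equiv.swap_apply_left, hi, hj]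
  rcases eq_or_ne t j with rfl | htj
  · simp [Equiv.swap_apply_right, hi, hj]
  · simp [Equiv.swap_apply_of_ne_of_ne hti htj]

lemma hiList_swap {m : ℕ} (x : Fin m → MSym) (i j : Fin m)
    (hi : (gUD (x i)).isSome) (hj : (gUD (x j)).isSome) :
    hiList (x ∘ Equiv.swap i j) = hiList x := by
  rw [hiList_eq, hiList_eq, List.ofFn_eq_map, List.ofFn_eq_map,
    List.filterMap_map, List.filterMap_map]
  congr 1
  funext t
  rcases eq_or_ne t i with rfl | hti
  · simp [Function.comp, Equiv.swap_apply_left, gHI_eq_none hi, gHI_eq_none hj]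
  rcases eq_or_ne t j with rfl | htj
  · simp [Function.comp, Equiv.swap_apply_right, gHI_eq_none hi, gHI_eq_none hj]
  · simp [Function.comp, Equiv.swap_apply_of_ne_of_ne hti htj]

lemma udList_swap_eq_map {m : ℕ} (x : Fin m → MSym) (i j : Fin m)
    (hi : (gUD (x i)).isSome) (hj : (gUD (x j)).isSome) :
    udList (x ∘ Equiv.swap i j) = (posL x).map (FF (x ∘ Equiv.swap i j)) := by
  rw [udList_map, posL_swap x i j hi hj]

lemma symCount_comp_equiv {m : ℕ} (x : Fin m → MSym) (e : Equiv.Perm (Fin m)) (a : MSym) :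
    symCount (x ∘ e) a = symCount x a := by
  unfold symCount
  apply Finset.card_equiv e
  intro i
  simp

lemma setTwo_eq_swap {m : ℕ} (x : Fin m → MSym) (i j : Fin m) (hij : i ≠ j) :
    setTwo x i j (x j) (x i) = x ∘ Equiv.swap i j := by
  funext t
  unfold setTwo
  rcases eq_or_ne t j with rfl | htj
  · simp [Equiv.swap_apply_right]
  rcases eq_or_ne t i with rfl | hti
  · rw [Function.update_of_ne htj, Function.update_self]
    simp [Equiv.swap_apply_left]
  · rw [Function.update_of_ne htj, Function.update_of_ne hti]
    simp [Equiv.swap_apply_of_ne_of_ne hti htj]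

lemma symCount_update {m : ℕ} (x : Fin m → MSym) (i : Fin m) (a b : MSym) :
    symCount (Function.update x i a) b + (if x i = b then 1 else 0)
      = symCount x b + (if a = b then 1 else 0) := by
  unfold symCount
  rw [Finset.card_filter, Finset.card_filter]
  rw [← Finset.add_sum_erase _ _ (Finset.mem_univ i),
    ← Finset.add_sum_erase _ _ (Finset.mem_univ i)]
  have hs : ∑ t ∈ Finset.univ.erase i, (if Function.update x i a t = b then 1 else 0)
      = ∑ t ∈ Finset.univ.erase i, (if x t = b then 1 else 0) := by
    apply Finset.sum_congr rfl
    intro t ht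
    rw [Function.update_of_ne (Finset.ne_of_mem_erase ht)]
  rw [hs, Function.update_self]
  ring

/-- adjacent swap of a `U/D` symbol with an `H/I` symbol does not change the skeleton -/
lemma udList_adj_swap {m : ℕ} (x : Fin m → MSym) (i j : Fin m) (hij : (j : ℕ) = (i : ℕ) + 1)
    (hnone : gUD (x i) = none ∨ gUD (x j) = none) :
    udList (x ∘ Equiv.swap i j) = udList x := by
  have hijne : i ≠ j := by
    intro h; rw [h] at hij; omega
  have him : (i : ℕ) + 1 < m := by rw [← hij]; exact j.isLt
  have decomp : ∀ z : Fin m → MSym, List.ofFn z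
      = (List.ofFn z).take (i : ℕ) ++ z i :: z j :: (List.ofFn z).drop ((i : ℕ) + 2) := by
    intro z
    conv_lhs => rw [← List.take_append_drop (i : ℕ) (List.ofFn z)]
    congr 1
    rw [List.drop_eq_getElem_cons (by simp only [List.length_ofFn]; omega)]
    rw [List.drop_eq_getElem_cons (l := List.ofFn z) (i := (i : ℕ) + 1)
      (by simp only [List.length_ofFn]; omega)]
    simp only [List.getElem_ofFn]
    congr 2
    all_goals first
      | rfl
      | (apply congrArg; apply Fin.ext; simp [hij])
  have htake : (List.ofFn (x ∘ Equiv.swap i j)).take (i : ℕ) = (List.ofFn x).take (i : ℕ) := by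
    apply List.ext_getElem (by simp)
    intro t h1 h2
    have htl : t < (i : ℕ) := by simpa using lt_of_lt_of_le h1 (by simp [List.length_take])
    rw [List.getElem_take, List.getElem_take, List.getElem_ofFn, List.getElem_ofFn]
    have h3 : (⟨t, by omega⟩ : Fin m) ≠ i := by
      intro h; apply absurd (congrArg Fin.val h); simp; omega
    have h4 : (⟨t, by omega⟩ : Fin m) ≠ j := by
      intro h; apply absurd (congrArg Fin.val h); simp; omega
    simp [Equiv.swap_apply_of_ne_of_ne h3 h4]
  have hdrop : (List.ofFn (x ∘ Equiv.swap i j)).drop ((i : ℕ) + 2)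
      = (List.ofFn x).drop ((i : ℕ) + 2) := by
    apply List.ext_getElem (by simp)
    intro t h1 h2
    have htm : (i : ℕ) + 2 + t < m := by
      simp only [List.length_drop, List.length_ofFn] at h2; omega
    rw [List.getElem_drop, List.getElem_drop]
    simp only [List.getElem_ofFn, Function.comp]
    rw [Equiv.swap_apply_of_ne_of_ne]
    · intro h; apply absurd (congrArg Fin.val h); simp; omega
    · intro h; apply absurd (congrArg Fin.val h); simp; omega
  rw [udList_eq, udList_eq, decomp (x ∘ Equiv.swap i j), decomp x, htake, hdrop]
  simp only [Function.comp, Equiv.swap_apply_left, Equiv.swap_apply_right]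
  rcases hnone with h | h <;>
    simp [List.filterMap_append, List.filterMap_cons, h]

/-! ### skeleton and swaps -/

lemma posL_nodup {m : ℕ} (x : Fin m → MSym) : (posL x).Nodup :=
  (List.nodup_finRange m).filter _

lemma mem_posL {m : ℕ} (x : Fin m → MSym) (i : Fin m) :
    i ∈ posL x ↔ (gUD (x i)).isSome := by
  unfold posL
  simp [List.mem_filter, List.mem_finRange]

lemma posL_length {m k : ℕ} (x : Fin m → MSym) (s1 : Fin (2 * k) → Bool)
    (hud : udList x = List.ofFn s1) : (posL x).length = 2 * k := by
  have hmap : List.ofFn s1 = (posL x).map (FF x) := by rw [← hud, udList_map]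
  have := congrArg List.length hmap
  simpa using this.symm

lemma skel_entry {m k : ℕ} (x : Fin m → MSym) (s1 : Fin (2 * k) → Bool)
    (hud : udList x = List.ofFn s1) (n : ℕ) (hn : n < 2 * k) :
    FF x ((posL x)[n]'(by rw [posL_length x s1 hud]; exact hn)) = s1 ⟨n, hn⟩ := by
  have hmap : List.ofFn s1 = (posL x).map (FF x) := by rw [← hud, udList_map]
  have h1 : (List.ofFn s1)[n]'(by simp [hn]) = s1 ⟨n, hn⟩ := by
    simp [List.getElem_ofFn]
  rw [← h1]
  rw [List.getElem_of_eq hmap]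
  simp

lemma skel_isSome {m k : ℕ} (x : Fin m → MSym) (s1 : Fin (2 * k) → Bool)
    (hud : udList x = List.ofFn s1) (n : ℕ) (hn : n < 2 * k) :
    (gUD (x ((posL x)[n]'(by rw [posL_length x s1 hud]; exact hn)))).isSome := by
  rw [← mem_posL]
  exact List.getElem_mem _

/-- value of `x` at a skeleton position -/
lemma x_at_posL_true {m k : ℕ} (x : Fin m → MSym) (s1 : Fin (2 * k) → Bool)
    (hud : udList x = List.ofFn s1) (n : ℕ) (hn : n < 2 * k) (h : s1 ⟨n, hn⟩ = true) :
    x ((posL x)[n]'(by rw [posL_length x s1 hud]; exact hn)) = MSym.U := by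
  have h1 := skel_entry x s1 hud n hn
  have h2 := skel_isSome x s1 hud n hn
  set i := (posL x)[n]'(by rw [posL_length x s1 hud]; exact hn)
  rw [h] at h1
  cases hxi : x i <;> simp_all [FF, gUD]

lemma x_at_posL_false {m k : ℕ} (x : Fin m → MSym) (s1 : Fin (2 * k) → Bool)
    (hud : udList x = List.ofFn s1) (n : ℕ) (hn : n < 2 * k) (h : s1 ⟨n, hn⟩ = false) :
    x ((posL x)[n]'(by rw [posL_length x s1 hud]; exact hn)) = MSym.D := by
  have h1 := skel_entry x s1 hud n hn
  have h2 := skel_isSome x s1 hud n hn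
  set i := (posL x)[n]'(by rw [posL_length x s1 hud]; exact hn)
  rw [h] at h1
  cases hxi : x i <;> simp_all [FF, gUD]

/-- swapping the symbols at the `a`-th and `b`-th skeleton positions
transforms the skeleton by the corresponding transposition. -/
lemma udList_swap_posL {m k : ℕ} (x : Fin m → MSym) (s1 : Fin (2 * k) → Bool)
    (hud : udList x = List.ofFn s1) (a b : Fin (2 * k)) :
    udList (x ∘ Equiv.swap
        ((posL x)[(a : ℕ)]'(by rw [posL_length x s1 hud]; exact a.isLt))
        ((posL x)[(b : ℕ)]'(by rw [posL_length x s1 hud]; exact b.isLt)))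
      = List.ofFn (fun n => s1 (Equiv.swap a b n)) := by
  have hlen := posL_length x s1 hud
  set i := (posL x)[(a : ℕ)]'(by rw [hlen]; exact a.isLt) with hi_def
  set j := (posL x)[(b : ℕ)]'(by rw [hlen]; exact b.isLt) with hj_def
  have hi : (gUD (x i)).isSome := skel_isSome x s1 hud a a.isLt
  have hj : (gUD (x j)).isSome := skel_isSome x s1 hud b b.isLt
  rw [udList_swap_eq_map x i j hi hj]
  apply List.ext_getElem (by simp [hlen])
  intro n h1 h2
  have hn : n < 2 * k := by simpa [hlen] using h1
  rw [List.getElem_map, List.getElem_ofFn]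
  have hnodup := posL_nodup x
  rcases eq_or_ne (⟨n, hn⟩ : Fin (2 * k)) a with rfl | hna
  · have : (posL x)[n]'(by rw [hlen]; exact hn) = i := rfl
    rw [this]
    simp only [FF, Function.comp, Equiv.swap_apply_left]
    have := skel_entry x s1 hud b b.isLt
    rw [← hj_def] at this
    simpa [FF] using this
  rcases eq_or_ne (⟨n, hn⟩ : Fin (2 * k)) b with rfl | hnb
  · have : (posL x)[n]'(by rw [hlen]; exact hn) = j := rfl
    rw [this]
    simp only [FF, Function.comp, Equiv.swap_apply_right]
    have := skel_entry x s1 hud a a.isLt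
    rw [← hi_def] at this
    simpa [FF] using this
  · have hne1 : (posL x)[n]'(by rw [hlen]; exact hn) ≠ i := by
      intro h
      apply hna
      have := (List.Nodup.getElem_inj_iff hnodup).mp h
      exact Fin.ext (by simpa using this)
    have hne2 : (posL x)[n]'(by rw [hlen]; exact hn) ≠ j := by
      intro h
      apply hnb
      have := (List.Nodup.getElem_inj_iff hnodup).mp h
      exact Fin.ext (by simpa using this)
    rw [Equiv.swap_apply_of_ne_of_ne hna hnb]
    have hFF : FF (x ∘ Equiv.swap i j) ((posL x)[n]'(by rw [hlen]; exact hn))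
        = FF x ((posL x)[n]'(by rw [hlen]; exact hn)) := by
      simp only [FF, Function.comp_apply]
      rw [Equiv.swap_apply_of_ne_of_ne hne1 hne2]
    rw [hFF]
    exact skel_entry x s1 hud n hn

/-! ### transposition moves as swaps -/

lemma eq_of_swap_eq {n : ℕ} (s1 : Fin n → Bool) (a b : Fin n) (hab : s1 a = s1 b) :
    (fun t => s1 (Equiv.swap a b t)) = s1 := by
  funext t
  rcases eq_or_ne t a with rfl | hta
  · rw [Equiv.swap_apply_left, hab]
  rcases eq_or_ne t b with rfl | htb
  · rw [Equiv.swap_apply_right, hab]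
  · rw [Equiv.swap_apply_of_ne_of_ne hta htb]

lemma swap_of_transpMove {k : ℕ} (s1 s2 : Dyck k) (h : TranspMove s1 s2) :
    ∃ a b : Fin (2 * k), a ≠ b ∧ s1.1 a = true ∧ s1.1 b = false ∧
      s2.1 = fun n => s1.1 (Equiv.swap a b n) := by
  obtain ⟨i, j, h1, h2, h3⟩ := h
  have hij : i ≠ j := by
    intro h; rw [h, h2] at h1; exact absurd h1 (by simp)
  refine ⟨i, j, hij, h1, h2, ?_⟩
  rw [h3]
  funext n
  rcases eq_or_ne n i with rfl | hni
  · rw [Equiv.swap_apply_left, h2, Function.update_of_ne hij, Function.update_self]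
  rcases eq_or_ne n j with rfl | hnj
  · rw [Equiv.swap_apply_right, h1, Function.update_self]
  · rw [Equiv.swap_apply_of_ne_of_ne hni hnj, Function.update_of_ne hnj,
      Function.update_of_ne hni]

lemma transpMove_of_swap {k : ℕ} (s1 s2 : Dyck k) (hne : s1 ≠ s2) (a b : Fin (2 * k))
    (h : s2.1 = fun n => s1.1 (Equiv.swap a b n)) :
    TranspMove s1 s2 ∧ s1.1 a ≠ s1.1 b := by
  have hab : s1.1 a ≠ s1.1 b := by
    intro hval
    apply hne
    apply Subtype.ext
    rw [h, eq_of_swap_eq _ _ _ hval]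
  have habne : a ≠ b := fun hh => hab (by rw [hh])
  refine ⟨?_, hab⟩
  cases hsa : s1.1 a with
  | true =>
    have hsb : s1.1 b = false := by
      cases hsb : s1.1 b
      · rfl
      · exact absurd (hsa.trans hsb.symm) hab
    refine ⟨a, b, hsa, hsb, ?_⟩
    rw [h]
    funext n
    rcases eq_or_ne n a with rfl | hna
    · rw [Equiv.swap_apply_left, hsb, Function.update_of_ne habne, Function.update_self]
    rcases eq_or_ne n b with rfl | hnb
    · rw [Equiv.swap_apply_right, hsa, Function.update_self]
    · rw [Equiv.swap_apply_of_ne_of_ne hna hnb, Function.update_of_ne hnb,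
        Function.update_of_ne hna]
  | false =>
    have hsb : s1.1 b = true := by
      cases hsb : s1.1 b
      · exact absurd (hsa.trans hsb.symm) hab
      · rfl
    refine ⟨b, a, hsb, hsa, ?_⟩
    rw [h]
    funext n
    rcases eq_or_ne n a with rfl | hna
    · rw [Equiv.swap_apply_left, hsb, Function.update_self]
    rcases eq_or_ne n b with rfl | hnb
    · rw [Equiv.swap_apply_right, hsa, Function.update_of_ne habne.symm,
        Function.update_self]
    · rw [Equiv.swap_apply_of_ne_of_ne hna hnb, Function.update_of_ne hna,
        Function.update_of_ne hnb]

lemma swap_pair_unique {n : ℕ} (s1 : Fin n → Bool) (a b a' b' : Fin n)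
    (hab : s1 a ≠ s1 b)
    (heq : (fun t => s1 (Equiv.swap a b t)) = fun t => s1 (Equiv.swap a' b' t)) :
    (a' = a ∧ b' = b) ∨ (a' = b ∧ b' = a) := by
  have habne : a ≠ b := fun hh => hab (by rw [hh])
  have hne' : (fun t => s1 (Equiv.swap a b t)) ≠ s1 := by
    intro hh
    have := congrFun hh a
    rw [Equiv.swap_apply_left] at this
    exact hab this.symm
  have ha' : a' = a ∨ a' = b := by
    by_contra hcon
    push_neg at hcon
    have e1 : s1 (Equiv.swap a b a') = s1 a' :=
      by rw [Equiv.swap_apply_of_ne_of_ne hcon.1 hcon.2]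
    have e2 : s1 (Equiv.swap a' b' a') = s1 b' := by rw [Equiv.swap_apply_left]
    have e3 : s1 a' = s1 b' := by rw [← e1, congrFun heq a', e2]
    apply hne'
    rw [heq]
    exact eq_of_swap_eq s1 a' b' e3
  have hb' : b' = a ∨ b' = b := by
    by_contra hcon
    push_neg at hcon
    have e1 : s1 (Equiv.swap a b b') = s1 b' :=
      by rw [Equiv.swap_apply_of_ne_of_ne hcon.1 hcon.2]
    have e2 : s1 (Equiv.swap a' b' b') = s1 a' := by rw [Equiv.swap_apply_right]
    have e3 : s1 b' = s1 a' := by rw [← e1, congrFun heq b', e2]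
    apply hne'
    rw [heq]
    exact eq_of_swap_eq s1 a' b' e3.symm
  have hab' : a' ≠ b' := by
    intro hh
    apply hne'
    rw [heq, hh]
    exact eq_of_swap_eq s1 b' b' rfl
  rcases ha' with rfl | rfl
  · rcases hb' with rfl | rfl
    · exact absurd rfl hab'
    · exact Or.inl ⟨rfl, rfl⟩
  · rcases hb' with rfl | rfl
    · exact Or.inr ⟨rfl, rfl⟩
    · exact absurd rfl hab'

/-! ### reconstruction and counting -/

def buildL : List Bool → List Bool → List Bool → List MSym
  | [], _, _ => []
  | (true :: ms), us, hs => (if us.headI then MSym.U else MSym.D) :: buildL ms us.tail hs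
  | (false :: ms), us, hs => (if hs.headI then MSym.H else MSym.I) :: buildL ms us hs.tail

lemma bl_length : ∀ (ms us hs : List Bool), (buildL ms us hs).length = ms.length := by
  intro ms
  induction ms with
  | nil => intro us hs; rfl
  | cons c ms ih =>
    intro us hs
    cases c <;> simp [buildL, ih]

lemma bl_mask : ∀ (ms us hs : List Bool),
    (buildL ms us hs).map (fun a => (gUD a).isSome) = ms := by
  intro ms
  induction ms with
  | nil => intro us hs; rfl
  | cons c ms ih =>
    intro us hs
    cases c
    · cases hh : hs.headI <;>
        simp [buildL, ih, hh, show (gUD MSym.H).isSome = false from rfl,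
          show (gUD MSym.I).isSome = false from rfl]
    · cases hh : us.headI <;>
        simp [buildL, ih, hh, show (gUD MSym.U).isSome = true from rfl,
          show (gUD MSym.D).isSome = true from rfl]

lemma bl_ud : ∀ (ms us hs : List Bool), ms.count true = us.length →
    (buildL ms us hs).filterMap gUD = us := by
  intro ms
  induction ms with
  | nil =>
    intro us hs h
    simp at h
    rw [List.eq_nil_of_length_eq_zero h.symm]
    rfl
  | cons c ms ih =>
    intro us hs h
    cases c
    · have h' : ms.count true = us.length := by
        simpa [List.count_cons] using h
      cases hh : hs.headI <;>
        simp [buildL, hh, List.filterMap_cons, show gUD MSym.H = none from rfl,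
          show gUD MSym.I = none from rfl, ih _ _ h']
    · rw [List.count_cons_self] at h
      cases us with
      | nil => simp at h
      | cons u us' =>
        have h' : ms.count true = us'.length := by simpa using h
        cases u <;> simp [buildL, List.filterMap_cons, show gUD MSym.U = some true from rfl,
          show gUD MSym.D = some false from rfl, ih _ _ h']

lemma bl_hi : ∀ (ms us hs : List Bool), ms.count false = hs.length →
    (buildL ms us hs).filterMap gHI = hs := by
  intro ms
  induction ms with
  | nil =>
    intro us hs h
    simp at h
    rw [List.eq_nil_of_length_eq_zero h.symm]
    rfl
  | cons c ms ih =>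
    intro us hs h
    cases c
    · rw [List.count_cons_self] at h
      cases hs with
      | nil => simp at h
      | cons u hs' =>
        have h' : ms.count false = hs'.length := by simpa using h
        cases u <;> simp [buildL, List.filterMap_cons, show gHI MSym.H = some true from rfl,
          show gHI MSym.I = some false from rfl, ih _ _ h']
    · have h' : ms.count false = hs.length := by
        simpa [List.count_cons] using h
      cases hh : us.headI <;>
        simp [buildL, hh, List.filterMap_cons, show gHI MSym.U = none from rfl,
          show gHI MSym.D = none from rfl, ih _ _ h']

lemma gUD_inj {a b : MSym} (h : gUD a = gUD b) (hs : (gUD a).isSome) : a = b := by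
  cases a <;> cases b <;> simp_all [gUD]

lemma gHI_inj {a b : MSym} (h : gHI a = gHI b) (hs : (gHI a).isSome) : a = b := by
  cases a <;> cases b <;> simp_all [gHI]

lemma list_eq_of_mask_ud_hi :
    ∀ (l1 l2 : List MSym),
      l1.map (fun a => (gUD a).isSome) = l2.map (fun a => (gUD a).isSome) →
      l1.filterMap gUD = l2.filterMap gUD →
      l1.filterMap gHI = l2.filterMap gHI → l1 = l2 := by
  intro l1
  induction l1 with
  | nil =>
    intro l2 hm _ _
    have := congrArg List.length hm
    simp at this
    rw [List.eq_nil_of_length_eq_zero this.symm]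
  | cons a t1 ih =>
    intro l2 hm hud hhi
    cases l2 with
    | nil => simp at hm
    | cons b t2 =>
      simp only [List.map_cons, List.cons.injEq] at hm
      obtain ⟨hm1, hm2⟩ := hm
      cases hsa : (gUD a).isSome
      · have hsb : (gUD b).isSome = false := by rw [← hm1, hsa]
        have ha : gUD a = none := Option.not_isSome_iff_eq_none.mp (by simp [hsa])
        have hb : gUD b = none := Option.not_isSome_iff_eq_none.mp (by simp [hsb])
        have hha : (gHI a).isSome := (gUD_or_gHI a).resolve_left (by simp [hsa])
        have hhb : (gHI b).isSome := (gUD_or_gHI b).resolve_left (by simp [hsb])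
        obtain ⟨va, hva⟩ := Option.isSome_iff_exists.mp hha
        obtain ⟨vb, hvb⟩ := Option.isSome_iff_exists.mp hhb
        rw [List.filterMap_cons, List.filterMap_cons, ha, hb] at hud
        rw [List.filterMap_cons, List.filterMap_cons, hva, hvb] at hhi
        simp only [List.cons.injEq] at hhi
        have hab : a = b := gHI_inj (by rw [hva, hvb, hhi.1]) hha
        rw [hab, ih t2 hm2 hud hhi.2]
      · have hsb : (gUD b).isSome = true := by rw [← hm1, hsa]
        obtain ⟨va, hva⟩ := Option.isSome_iff_exists.mp hsa
        obtain ⟨vb, hvb⟩ := Option.isSome_iff_exists.mp hsb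
        have hha : gHI a = none := gHI_eq_none hsa
        have hhb : gHI b = none := gHI_eq_none hsb
        rw [List.filterMap_cons, List.filterMap_cons, hva, hvb] at hud
        rw [List.filterMap_cons, List.filterMap_cons, hha, hhb] at hhi
        simp only [List.cons.injEq] at hud
        have hab : a = b := gUD_inj (by rw [hva, hvb, hud.1]) hsa
        rw [hab, ih t2 hm2 hud.2 hhi]

lemma eq_of_mask_ud_hi {m : ℕ} (x1 x2 : Fin m → MSym)
    (hm : ∀ i, (gUD (x1 i)).isSome = (gUD (x2 i)).isSome)
    (hud : udList x1 = udList x2) (hhi : hiList x1 = hiList x2) : x1 = x2 := by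
  rw [udList_eq, udList_eq] at hud
  rw [hiList_eq, hiList_eq] at hhi
  have hmask : (List.ofFn x1).map (fun a => (gUD a).isSome)
      = (List.ofFn x2).map (fun a => (gUD a).isSome) := by
    rw [List.map_ofFn, List.map_ofFn]
    exact congrArg List.ofFn (funext fun i => hm i)
  exact List.ofFn_inj.mp (list_eq_of_mask_ud_hi _ _ hmask hud hhi)

lemma count_true_ofFn_dyck {k : ℕ} (s : Dyck k) : (List.ofFn s.1).count true = k := by
  rw [count_ofFn_bool]
  have h2 := s.2.2
  have hsum : (univ.filter fun i : Fin (2 * k) => s.1 i = true).card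
      + (univ.filter fun i : Fin (2 * k) => s.1 i = false).card = 2 * k := by
    have := Finset.card_filter_add_card_filter_not
      (s := (univ : Finset (Fin (2 * k)))) (p := fun i => s.1 i = true)
    simp only [Finset.card_univ, Fintype.card_fin] at this
    have hcf : (univ.filter fun a : Fin (2 * k) => ¬ s.1 a = true).card
        = (univ.filter fun i : Fin (2 * k) => s.1 i = false).card := by
      congr 1
      apply Finset.filter_congr
      intro i _
      simp
    omega
  omega

lemma count_false_ofFn_dyck {k : ℕ} (s : Dyck k) : (List.ofFn s.1).count false = k := by
  have h1 := count_true_ofFn_dyck s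
  have h2 := s.2.2
  rw [count_ofFn_bool] at h1 ⊢
  have h2' : (univ.filter fun i : Fin (2 * k) => s.1 i = true).card
      = (univ.filter fun i : Fin (2 * k) => s.1 i = false).card := h2
  omega

lemma bool_list_length (w : List Bool) : w.length = w.count true + w.count false := by
  induction w with
  | nil => rfl
  | cons c t ih =>
    cases c
    · rw [List.length_cons, List.count_cons_of_ne (by decide), List.count_cons_self]; omega
    · rw [List.length_cons, List.count_cons_self, List.count_cons_of_ne (by decide)]; omega

/-- the central construction: a path in `U_{k,q,s}` with a prescribed set of
`U/D`-positions -/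
lemma exists_x_of_mask {m k : ℕ} (s : Dyck k) (q : Fin (m - 2 * k) → Bool)
    (A : Finset (Fin m)) (hA : A.card = 2 * k) :
    ∃ x : Fin m → MSym, IsMotzkin2 x ∧ symCount x MSym.U = k ∧
      hiList x = List.ofFn q ∧ udList x = List.ofFn s.1 ∧
      (univ.filter fun i => (gUD (x i)).isSome) = A := by
  classical
  set w : Fin m → Bool := fun i => decide (i ∈ A) with hw
  have hcw : (List.ofFn w).count true = 2 * k := by
    rw [count_ofFn_bool, ← hA]
    congr 1
    ext i
    simp only [Finset.mem_filter, Finset.mem_univ, true_and, hw, decide_eq_true_eq]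
  have hcwf : (List.ofFn w).count false = m - 2 * k := by
    have := bool_list_length (List.ofFn w)
    simp only [List.length_ofFn] at this
    omega
  set lst := buildL (List.ofFn w) (List.ofFn s.1) (List.ofFn q) with hlst
  have hlen : lst.length = m := by rw [hlst, bl_length]; simp
  set x : Fin m → MSym := fun i => lst[(i : ℕ)]'(by rw [hlen]; exact i.isLt) with hx
  have hofn : List.ofFn x = lst := by
    apply List.ext_getElem (by simp [hlen])
    intro n h1 h2
    simp [hx]
  have hud : udList x = List.ofFn s.1 := by
    rw [udList_eq, hofn, hlst]
    exact bl_ud _ _ _ (by rw [hcw]; simp)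
  have hhi : hiList x = List.ofFn q := by
    rw [hiList_eq, hofn, hlst]
    exact bl_hi _ _ _ (by rw [hcwf]; simp)
  have hmask : ∀ i : Fin m, (gUD (x i)).isSome = w i := by
    intro i
    have := bl_mask (List.ofFn w) (List.ofFn s.1) (List.ofFn q)
    rw [← hlst] at this
    have h2 := congrArg (fun l => l[(i : ℕ)]?) this
    simp only [List.getElem?_map] at h2
    rw [List.getElem?_eq_getElem (by rw [hlen]; exact i.isLt),
      List.getElem?_eq_getElem (by simp)] at h2
    simp only [Option.map_some, Option.some.injEq, List.getElem_ofFn] at h2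
    rw [← h2]
  refine ⟨x, ?_, ?_, hhi, hud, ?_⟩
  · rw [isMotzkin2_iff_DW, hud, ← isDyck_iff_DW]
    exact s.2
  · rw [← count_udList_true, hud]
    exact count_true_ofFn_dyck s
  · ext i
    simp only [Finset.mem_filter, Finset.mem_univ, true_and, hmask]
    simp [hw]

lemma card_mask {m k : ℕ} (x : Fin m → MSym) (s : Dyck k)
    (hud : udList x = List.ofFn s.1) :
    (univ.filter fun i => (gUD (x i)).isSome).card = 2 * k := by
  have h1 : (List.ofFn x).countP (fun a => (gUD a).isSome) = 2 * k := by
    rw [← List.length_filterMap_eq_countP, ← udList_eq, hud]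
    simp
  rw [countP_ofFn] at h1
  exact h1

/-! ### cardinalities -/

lemma mem_Uset_iff {m k : ℕ} {q : Fin (m - 2 * k) → Bool} {s : Dyck k}
    {x : TkqType m k q} : x ∈ Uset m k q s ↔ udList x.1.1 = List.ofFn s.1 := by
  unfold Uset
  simp

lemma card_Uset {m k : ℕ} (q : Fin (m - 2 * k) → Bool) (s : Dyck k) :
    (Uset m k q s).card = m.choose (2 * k) := by
  classical
  have hbij : (Uset m k q s).card
      = (Finset.powersetCard (2 * k) (univ : Finset (Fin m))).card := by
    apply Finset.card_bij (fun x _ => univ.filter fun t => (gUD (x.1.1 t)).isSome)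
    · intro x hx
      rw [Finset.mem_powersetCard]
      exact ⟨Finset.subset_univ _, card_mask x.1.1 s (mem_Uset_iff.mp hx)⟩
    · intro x1 hx1 x2 hx2 heq
      apply Subtype.ext
      apply Subtype.ext
      apply eq_of_mask_ud_hi
      · intro i
        have h1 := Finset.ext_iff.mp heq i
        simp only [Finset.mem_filter, Finset.mem_univ, true_and] at h1
        cases h2 : (gUD (x1.1.1 i)).isSome
        · cases h3 : (gUD (x2.1.1 i)).isSome
          · rfl
          · exact absurd (h1.mpr h3) (by simp [h2])
        · rw [h1.mp h2]
      · rw [mem_Uset_iff.mp hx1, mem_Uset_iff.mp hx2]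
      · rw [x1.2.2, x2.2.2]
    · intro A hA
      rw [Finset.mem_powersetCard] at hA
      obtain ⟨x, hmot, hcU, hhi, hud, hmask⟩ := exists_x_of_mask s q A hA.2
      refine ⟨⟨⟨x, hmot⟩, hcU, hhi⟩, ?_, hmask⟩
      rw [mem_Uset_iff]
      exact hud
  rw [hbij, Finset.card_powersetCard]
  simp

lemma udList_length_T {m k : ℕ} {q : Fin (m - 2 * k) → Bool} (x : TkqType m k q) :
    (udList x.1.1).length = 2 * k := by
  rw [bool_list_length, count_udList_true, count_udList_false, x.2.1, ← x.1.2.2, x.2.1]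
  omega

/-- the skeleton of an element of `T_{k,q}`, as a Dyck path -/
def skelD {m k : ℕ} {q : Fin (m - 2 * k) → Bool} (x : TkqType m k q) : Dyck k :=
  ⟨fun n => (udList x.1.1).get (Fin.cast (udList_length_T x).symm n), by
    have hofn : List.ofFn (fun n : Fin (2 * k) =>
        (udList x.1.1).get (Fin.cast (udList_length_T x).symm n)) = udList x.1.1 := by
      apply List.ext_getElem (by simp [udList_length_T x])
      intro n h1 h2
      simp [List.getElem_ofFn, List.get_eq_getElem]
    rw [isDyck_iff_DW, hofn]
    exact (isMotzkin2_iff_DW _).mp x.1.2⟩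

lemma ofFn_skelD {m k : ℕ} {q : Fin (m - 2 * k) → Bool} (x : TkqType m k q) :
    List.ofFn (skelD x).1 = udList x.1.1 := by
  apply List.ext_getElem (by simp [udList_length_T x])
  intro n h1 h2
  simp [skelD, List.getElem_ofFn, List.get_eq_getElem]

lemma skelD_eq_iff {m k : ℕ} {q : Fin (m - 2 * k) → Bool} (x : TkqType m k q) (s : Dyck k) :
    skelD x = s ↔ udList x.1.1 = List.ofFn s.1 := by
  constructor
  · intro h
    rw [← ofFn_skelD x, h]
  · intro h
    apply Subtype.ext
    apply List.ofFn_inj.mp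
    rw [ofFn_skelD x, h]

lemma card_TkqType {m k : ℕ} (q : Fin (m - 2 * k) → Bool) :
    Fintype.card (TkqType m k q) = Fintype.card (Dyck k) * m.choose (2 * k) := by
  classical
  rw [← Finset.card_univ]
  rw [Finset.card_eq_sum_card_fiberwise (f := skelD) (t := univ) (fun x _ => Finset.mem_univ _)]
  have hfib : ∀ s : Dyck k, (univ.filter fun x : TkqType m k q => skelD x = s)
      = Uset m k q s := by
    intro s
    ext x
    rw [Finset.mem_filter, mem_Uset_iff]
    simp [skelD_eq_iff]
  rw [Finset.sum_congr rfl (fun s _ => by rw [hfib s, card_Uset])]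
  simp [Finset.card_univ, mul_comm]

/-! ### nonemptiness -/

lemma filterMap_replicate_none {α β : Type*} (g : α → Option β) (a : α) (h : g a = none) :
    ∀ n, (List.replicate n a).filterMap g = [] := by
  intro n
  induction n with
  | zero => rfl
  | succ n ih => rw [List.replicate_succ, List.filterMap_cons, h, ih]

instance motzkin2_nonempty {m : ℕ} : Nonempty (Motzkin2 m) := by
  refine ⟨⟨fun _ => MSym.H, ?_⟩⟩
  rw [isMotzkin2_iff_DW]
  have : udList (fun _ : Fin m => MSym.H) = [] := by
    rw [udList_eq, List.ofFn_const, filterMap_replicate_none gUD MSym.H rfl]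
  rw [this]
  exact ⟨fun n => by simp, by simp⟩

lemma dyck_s0 {k : ℕ} : IsDyck (fun n : Fin (2 * k) => decide ((n : ℕ) < k)) := by
  rw [isDyck_iff_DW]
  have hofn : List.ofFn (fun n : Fin (2 * k) => decide ((n : ℕ) < k))
      = List.replicate k true ++ List.replicate k false := by
    apply List.ext_getElem (by simp; omega)
    intro n h1 h2
    simp only [List.getElem_ofFn]
    rcases lt_or_ge n k with h | h
    · rw [List.getElem_append_left (by simpa using h)]
      simp [List.getElem_replicate, h]
    · rw [List.getElem_append_right (by simpa using h)]
      simp only [List.length_replicate, List.getElem_replicate]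
      simp; omega
  rw [hofn]
  constructor
  · intro n
    rw [List.take_append]
    simp only [List.take_replicate, List.length_replicate, List.count_append,
      List.count_replicate]
    simp
    try omega
  · simp [List.count_replicate]

instance dyck_nonempty {k : ℕ} : Nonempty (Dyck k) := ⟨⟨_, dyck_s0⟩⟩

lemma tkq_nonempty {m k : ℕ} (hmk : 2 * k ≤ m) (q : Fin (m - 2 * k) → Bool) :
    Nonempty (TkqType m k q) := by
  classical
  obtain ⟨A, _, hA⟩ := Finset.exists_subset_card_eq (s := (univ : Finset (Fin m))) (n := 2 * k) (by simpa)
  obtain ⟨x, hmot, hcU, hhi, hud, hmask⟩ :=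
    exists_x_of_mask (⟨_, dyck_s0⟩ : Dyck k) q A hA
  exact ⟨⟨⟨x, hmot⟩, hcU, hhi⟩⟩

/-! ### the stationary distribution -/

lemma Z_pos (α β : ℝ) (m : ℕ) : 0 < ∑ y : Motzkin2 m, Real.exp (-(energy α β y.1)) :=
  Finset.sum_pos (fun y _ => Real.exp_pos _) Finset.univ_nonempty

lemma energy_T_const (α β : ℝ) {m k : ℕ} {q : Fin (m - 2 * k) → Bool} (x : TkqType m k q) :
    energy α β x.1.1 = α * ((k : ℝ) + (((List.ofFn q).count true : ℕ) : ℝ) + 1)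
      + β * (((List.ofFn q).count false : ℕ) : ℝ) := by
  unfold energy
  rw [x.2.1, ← count_hiList_true, ← count_hiList_false, x.2.2]

lemma gibbsKQ_eq {α β : ℝ} {m k : ℕ} (hmk : 2 * k ≤ m) {q : Fin (m - 2 * k) → Bool}
    (x : TkqType m k q) :
    gibbsKQ α β m k q x = 1 / (Fintype.card (TkqType m k q) : ℝ) := by
  classical
  have hne := tkq_nonempty hmk q
  have hcard : 0 < (Fintype.card (TkqType m k q) : ℝ) := by
    have := Fintype.card_pos_iff.mpr hne
    exact_mod_cast this
  set c : ℝ := α * ((k : ℝ) + (((List.ofFn q).count true : ℕ) : ℝ) + 1)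
      + β * (((List.ofFn q).count false : ℕ) : ℝ) with hc
  have hgib : ∀ y : TkqType m k q, gibbs α β m y.1
      = Real.exp (-c) / ∑ z : Motzkin2 m, Real.exp (-(energy α β z.1)) := by
    intro y
    unfold gibbs
    rw [energy_T_const α β y]
  have hsum : ∑ y : TkqType m k q, gibbs α β m y.1
      = (Fintype.card (TkqType m k q) : ℝ)
        * (Real.exp (-c) / ∑ z : Motzkin2 m, Real.exp (-(energy α β z.1))) := by
    rw [Finset.sum_congr rfl (fun y _ => hgib y)]
    rw [Finset.sum_const, Finset.card_univ, nsmul_eq_mul]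
  have hpos : 0 < Real.exp (-c) / ∑ z : Motzkin2 m, Real.exp (-(energy α β z.1)) :=
    div_pos (Real.exp_pos _) (Z_pos α β m)
  unfold gibbsKQ
  rw [hgib x, hsum]
  rw [div_eq_iff (by positivity)]
  field_simp

/-! ### transitions -/

lemma isUD_iff (a : MSym) : isUD a ↔ (gUD a).isSome := by
  cases a <;> simp [isUD, gUD]

lemma isHI_gUD_none {a : MSym} (h : isHI a) : gUD a = none := by
  cases a <;> simp_all [isHI, gUD]

lemma mem_adjPairs_iff {m : ℕ} (p : Fin m × Fin m) :
    p ∈ adjPairs m ↔ (p.2 : ℕ) = (p.1 : ℕ) + 1 := by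
  unfold adjPairs
  simp

lemma setTwo_self {m : ℕ} (x : Fin m → MSym) (p : Fin m) :
    setTwo x p p (x p) (x p) = x := by
  unfold setTwo
  rw [Function.update_idem, Function.update_eq_self]

lemma T_ne_of_udList_ne {m k : ℕ} {q : Fin (m - 2 * k) → Bool} (x y : TkqType m k q)
    (h : udList x.1.1 ≠ udList y.1.1) : x.1 ≠ y.1 := by
  intro hh
  exact h (congrArg (fun z : Motzkin2 m => udList z.1) hh)

/-- if the skeletons differ, only move 3 can have been used -/
lemma stepWeight_eq_move3 (α β : ℝ) {m k : ℕ} {q : Fin (m - 2 * k) → Bool}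
    (x y : TkqType m k q) (hxy : udList x.1.1 ≠ udList y.1.1) :
    stepWeight α β x.1.1 y.1.1
      = (1/4) * (1/((m : ℝ) * (m : ℝ))) * (1/2) *
        ∑ p : Fin m × Fin m,
          (if isUD (x.1.1 p.1) ∧ isUD (x.1.1 p.2) ∧
              y.1.1 = setTwo x.1.1 p.1 p.2 (x.1.1 p.2) (x.1.1 p.1) then (1 : ℝ) else 0) := by
  have hkx := x.2.1
  have hky := y.2.1
  have hHx := count_hiList_true x.1.1
  have hHy := count_hiList_true y.1.1
  rw [x.2.2] at hHx
  rw [y.2.2] at hHy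
  have e1 : (∑ p ∈ adjPairs m,
      ((if x.1.1 p.1 = MSym.U ∧ x.1.1 p.2 = MSym.D ∧
            y.1.1 = setTwo x.1.1 p.1 p.2 MSym.H MSym.H then
          Real.exp (-α) / (1 + Real.exp (-α)) else 0) +
       (if x.1.1 p.1 = MSym.H ∧ x.1.1 p.2 = MSym.H ∧
            y.1.1 = setTwo x.1.1 p.1 p.2 MSym.U MSym.D then
          1 / (1 + Real.exp (-α)) else 0))) = 0 := by
    apply Finset.sum_eq_zero
    intro p hp
    have hpp : (p.2 : ℕ) = (p.1 : ℕ) + 1 := (mem_adjPairs_iff p).mp hp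
    have hne : p.1 ≠ p.2 := by
      intro h
      rw [h] at hpp
      omega
    rw [if_neg, if_neg, add_zero]
    · rintro ⟨hU, hD, hy⟩
      have c1 := symCount_update x.1.1 p.1 MSym.U MSym.U
      rw [hU] at c1
      simp at c1
      have c2 := symCount_update (Function.update x.1.1 p.1 MSym.U) p.2 MSym.D MSym.U
      rw [Function.update_of_ne (Ne.symm hne), hD] at c2
      simp at c2
      have hyc : symCount y.1.1 MSym.U = k := hky
      rw [hy] at hyc
      unfold setTwo at hyc
      omega
    · rintro ⟨hU, hD, hy⟩
      have c1 := symCount_update x.1.1 p.1 MSym.H MSym.U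
      rw [hU] at c1
      simp at c1
      have c2 := symCount_update (Function.update x.1.1 p.1 MSym.H) p.2 MSym.H MSym.U
      rw [Function.update_of_ne (Ne.symm hne), hD] at c2
      simp at c2
      have hyc : symCount y.1.1 MSym.U = k := hky
      rw [hy] at hyc
      unfold setTwo at hyc
      omega
  have e2 : (∑ i : Fin m,
      ((if x.1.1 i = MSym.I ∧ y.1.1 = Function.update x.1.1 i MSym.H then
          Real.exp (-α) / (Real.exp (-α) + Real.exp (-β)) else 0) +
       (if x.1.1 i = MSym.H ∧ y.1.1 = Function.update x.1.1 i MSym.I then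
          Real.exp (-β) / (Real.exp (-α) + Real.exp (-β)) else 0))) = 0 := by
    apply Finset.sum_eq_zero
    intro i _
    rw [if_neg, if_neg, add_zero]
    · rintro ⟨hH, hy⟩
      have c1 := symCount_update x.1.1 i MSym.I MSym.H
      rw [hH] at c1
      simp at c1
      have hyc : symCount y.1.1 MSym.H = symCount x.1.1 MSym.H := by
        rw [← hHx, ← hHy]
      rw [hy] at hyc
      omega
    · rintro ⟨hI, hy⟩
      have c1 := symCount_update x.1.1 i MSym.H MSym.H
      rw [hI] at c1
      simp at c1
      have hyc : symCount y.1.1 MSym.H = symCount x.1.1 MSym.H := by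
        rw [← hHx, ← hHy]
      rw [hy] at hyc
      omega
  have e4 : (∑ p ∈ adjPairs m,
      (if ((isUD (x.1.1 p.1) ∧ isHI (x.1.1 p.2)) ∨ (isHI (x.1.1 p.1) ∧ isUD (x.1.1 p.2))) ∧
          y.1.1 = setTwo x.1.1 p.1 p.2 (x.1.1 p.2) (x.1.1 p.1) then (1 : ℝ) else 0)) = 0 := by
    apply Finset.sum_eq_zero
    intro p hp
    have hpp : (p.2 : ℕ) = (p.1 : ℕ) + 1 := (mem_adjPairs_iff p).mp hp
    have hne : p.1 ≠ p.2 := by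
      intro h
      rw [h] at hpp
      omega
    rw [if_neg]
    rintro ⟨hcl, hy⟩
    apply hxy
    have hy' : y.1.1 = x.1.1 ∘ Equiv.swap p.1 p.2 := by
      rw [hy, setTwo_eq_swap _ _ _ hne]
    rw [hy']
    have hnone : gUD (x.1.1 p.1) = none ∨ gUD (x.1.1 p.2) = none := by
      rcases hcl with ⟨_, h2⟩ | ⟨h1, _⟩
      · exact Or.inr (isHI_gUD_none h2)
      · exact Or.inl (isHI_gUD_none h1)
    rw [udList_adj_swap x.1.1 p.1 p.2 hpp hnone]
  unfold stepWeight
  rw [e1, e2, e4]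
  ring

/-! ### move-3 analysis -/

def posAt {m k : ℕ} (x : Fin m → MSym) (hlen : (posL x).length = 2 * k)
    (a : Fin (2 * k)) : Fin m :=
  (posL x)[(a : ℕ)]'(by rw [hlen]; exact a.isLt)

lemma posAt_isSome {m k : ℕ} (x : Fin m → MSym) (hlen : (posL x).length = 2 * k)
    (a : Fin (2 * k)) : (gUD (x (posAt x hlen a))).isSome := by
  rw [← mem_posL]
  exact List.getElem_mem _

lemma posAt_inj {m k : ℕ} (x : Fin m → MSym) (hlen : (posL x).length = 2 * k)
    {a b : Fin (2 * k)} (h : posAt x hlen a = posAt x hlen b) : a = b := by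
  unfold posAt at h
  have := (List.Nodup.getElem_inj_iff (posL_nodup x)).mp h
  exact Fin.ext this

lemma udList_swap_posAt {m k : ℕ} (x : Fin m → MSym) (s1 : Fin (2 * k) → Bool)
    (hud : udList x = List.ofFn s1) (hlen : (posL x).length = 2 * k) (a b : Fin (2 * k)) :
    udList (x ∘ Equiv.swap (posAt x hlen a) (posAt x hlen b))
      = List.ofFn (fun n => s1 (Equiv.swap a b n)) :=
  udList_swap_posL x s1 hud a b

lemma move3_classify {m k : ℕ} {q : Fin (m - 2 * k) → Bool} (x y : TkqType m k q)
    (s1 s2 : Dyck k) (hx : udList x.1.1 = List.ofFn s1.1) (hy : udList y.1.1 = List.ofFn s2.1)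
    (hs : s1 ≠ s2) (hlen : (posL x.1.1).length = 2 * k) (p1 p2 : Fin m)
    (h1 : isUD (x.1.1 p1)) (h2 : isUD (x.1.1 p2))
    (hyy : y.1.1 = setTwo x.1.1 p1 p2 (x.1.1 p2) (x.1.1 p1)) :
    ∃ a' b' : Fin (2 * k), posAt x.1.1 hlen a' = p1 ∧ posAt x.1.1 hlen b' = p2 ∧
      s2.1 = fun n => s1.1 (Equiv.swap a' b' n) := by
  have hudne : udList x.1.1 ≠ udList y.1.1 := by
    rw [hx, hy]
    intro h
    exact hs (Subtype.ext (List.ofFn_inj.mp h))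
  have hp12 : p1 ≠ p2 := by
    intro h
    apply hudne
    rw [hyy, h, setTwo_self]
  have hyy' : y.1.1 = x.1.1 ∘ Equiv.swap p1 p2 := by
    rw [hyy, setTwo_eq_swap _ _ _ hp12]
  obtain ⟨n1, hn1, hg1⟩ := List.getElem_of_mem ((mem_posL _ _).mpr ((isUD_iff _).mp h1))
  obtain ⟨n2, hn2, hg2⟩ := List.getElem_of_mem ((mem_posL _ _).mpr ((isUD_iff _).mp h2))
  refine ⟨⟨n1, by rw [← hlen]; exact hn1⟩, ⟨n2, by rw [← hlen]; exact hn2⟩, hg1, hg2, ?_⟩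
  have hsw := udList_swap_posAt x.1.1 s1.1 hx hlen
    ⟨n1, by rw [← hlen]; exact hn1⟩ ⟨n2, by rw [← hlen]; exact hn2⟩
  have hpa1 : posAt x.1.1 hlen ⟨n1, by rw [← hlen]; exact hn1⟩ = p1 := hg1
  have hpa2 : posAt x.1.1 hlen ⟨n2, by rw [← hlen]; exact hn2⟩ = p2 := hg2
  rw [hpa1, hpa2, ← hyy', hy] at hsw
  exact funext fun n => congrFun (List.ofFn_inj.mp hsw) n

lemma move3_none (α β : ℝ) {m k : ℕ} {q : Fin (m - 2 * k) → Bool} (x y : TkqType m k q)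
    (s1 s2 : Dyck k) (hx : udList x.1.1 = List.ofFn s1.1)
    (hy : udList y.1.1 = List.ofFn s2.1) (hs : s1 ≠ s2) (hnt : ¬ TranspMove s1 s2) :
    transP α β m x.1 y.1 = 0 := by
  have hudne : udList x.1.1 ≠ udList y.1.1 := by
    rw [hx, hy]
    intro h
    exact hs (Subtype.ext (List.ofFn_inj.mp h))
  have hlen := posL_length x.1.1 s1.1 hx
  unfold transP
  rw [if_neg (Ne.symm (Ne.symm (T_ne_of_udList_ne x y hudne)))]
  rw [stepWeight_eq_move3 α β x y hudne]
  rw [Finset.sum_eq_zero, mul_zero]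
  intro p _
  rw [if_neg]
  rintro ⟨h1, h2, hyy⟩
  obtain ⟨a', b', _, _, hs2⟩ := move3_classify x y s1 s2 hx hy hs hlen p.1 p.2 h1 h2 hyy
  exact hnt (transpMove_of_swap s1 s2 hs a' b' hs2).1

lemma move3_construct (α β : ℝ) {m k : ℕ} (hm : 2 ≤ m) {q : Fin (m - 2 * k) → Bool}
    (x : TkqType m k q) (s1 s2 : Dyck k) (hx : udList x.1.1 = List.ofFn s1.1)
    (hs : s1 ≠ s2) (ht : TranspMove s1 s2) :
    ∃ y0 : TkqType m k q, y0 ∈ Uset m k q s2 ∧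
      transP α β m x.1 y0.1 = 1 / (4 * (m : ℝ) ^ 2) ∧
      (∀ y : TkqType m k q, y ∈ Uset m k q s2 → 0 < transP α β m x.1 y.1 → y = y0) := by
  classical
  have hlen := posL_length x.1.1 s1.1 hx
  obtain ⟨a, b, hab, hsa, hsb, hs2⟩ := swap_of_transpMove s1 s2 ht
  set i := posAt x.1.1 hlen a with hi_def
  set j := posAt x.1.1 hlen b with hj_def
  have hij : i ≠ j := fun h => hab (posAt_inj x.1.1 hlen h)
  have hIi : (gUD (x.1.1 i)).isSome := posAt_isSome x.1.1 hlen a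
  have hIj : (gUD (x.1.1 j)).isSome := posAt_isSome x.1.1 hlen b
  have hxiU : x.1.1 i = MSym.U := x_at_posL_true x.1.1 s1.1 hx a a.isLt hsa
  have hxjD : x.1.1 j = MSym.D := x_at_posL_false x.1.1 s1.1 hx b b.isLt hsb
  set y0fun : Fin m → MSym := x.1.1 ∘ Equiv.swap i j with hy0_def
  have hy0ud : udList y0fun = List.ofFn s2.1 :=
    (udList_swap_posAt x.1.1 s1.1 hx hlen a b).trans (congrArg List.ofFn hs2.symm)
  have hy0mot : IsMotzkin2 y0fun := by
    rw [isMotzkin2_iff_DW, hy0ud, ← isDyck_iff_DW]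
    exact s2.2
  have hy0U : symCount y0fun MSym.U = k := by
    rw [hy0_def, symCount_comp_equiv]
    exact x.2.1
  have hy0hi : hiList y0fun = List.ofFn q := by
    rw [hy0_def, hiList_swap x.1.1 i j hIi hIj]
    exact x.2.2
  set y0 : TkqType m k q := ⟨⟨y0fun, hy0mot⟩, hy0U, hy0hi⟩ with hy0t
  have hy0mem : y0 ∈ Uset m k q s2 := mem_Uset_iff.mpr hy0ud
  have hudne0 : udList x.1.1 ≠ udList y0.1.1 := by
    rw [hx]
    show _ ≠ udList y0fun
    rw [hy0ud]
    intro h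
    exact hs (Subtype.ext (List.ofFn_inj.mp h))
  -- the key classification
  have hkey : ∀ (y : TkqType m k q), udList y.1.1 = List.ofFn s2.1 →
      ∀ p : Fin m × Fin m,
        (isUD (x.1.1 p.1) ∧ isUD (x.1.1 p.2) ∧
          y.1.1 = setTwo x.1.1 p.1 p.2 (x.1.1 p.2) (x.1.1 p.1)) →
        y.1.1 = y0fun ∧ (p = (i, j) ∨ p = (j, i)) := by
    intro y hyud p hcond
    obtain ⟨h1, h2, hyy⟩ := hcond
    obtain ⟨a', b', hpa, hpb, hs2'⟩ :=
      move3_classify x y s1 s2 hx hyud hs hlen p.1 p.2 h1 h2 hyy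
    have hvalab : s1.1 a ≠ s1.1 b := by rw [hsa, hsb]; simp
    have heq2 : (fun t => s1.1 (Equiv.swap a b t)) = fun t => s1.1 (Equiv.swap a' b' t) := by
      rw [← hs2, ← hs2']
    have hcases := swap_pair_unique s1.1 a b a' b' hvalab heq2
    have hp12 : p.1 ≠ p.2 := by
      rintro hpp
      rw [← hpa, ← hpb] at hpp
      have : a' = b' := posAt_inj x.1.1 hlen hpp
      rcases hcases with ⟨rfl, rfl⟩ | ⟨rfl, rfl⟩
      · exact hab this
      · exact hab this.symm
    rcases hcases with ⟨rfl, rfl⟩ | ⟨rfl, rfl⟩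
    · constructor
      · rw [hyy, setTwo_eq_swap _ _ _ hp12, ← hpa, ← hpb, hy0_def]
      · left
        have : p = (p.1, p.2) := rfl
        rw [this, ← hpa, ← hpb]
    · constructor
      · rw [hyy, setTwo_eq_swap _ _ _ hp12, ← hpa, ← hpb, hy0_def]
        rw [Equiv.swap_comm]
      · right
        have : p = (p.1, p.2) := rfl
        rw [this, ← hpa, ← hpb]
  -- the indicator sum is 2
  have hsum2 : (∑ p : Fin m × Fin m,
      (if isUD (x.1.1 p.1) ∧ isUD (x.1.1 p.2) ∧
          y0.1.1 = setTwo x.1.1 p.1 p.2 (x.1.1 p.2) (x.1.1 p.1) then (1 : ℝ) else 0)) = 2 := by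
    have hfilter : (univ.filter fun p : Fin m × Fin m =>
        isUD (x.1.1 p.1) ∧ isUD (x.1.1 p.2) ∧
          y0.1.1 = setTwo x.1.1 p.1 p.2 (x.1.1 p.2) (x.1.1 p.1))
        = {(i, j), (j, i)} := by
      ext p
      simp only [Finset.mem_filter, Finset.mem_univ, true_and, Finset.mem_insert,
        Finset.mem_singleton]
      constructor
      · intro hcond
        exact (hkey y0 hy0ud p hcond).2
      · rintro (rfl | rfl)
        · refine ⟨by rw [hxiU]; exact Or.inl rfl, by rw [hxjD]; exact Or.inr rfl, ?_⟩
          show y0fun = _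
          rw [setTwo_eq_swap _ _ _ hij, hy0_def]
        · refine ⟨by rw [hxjD]; exact Or.inr rfl, by rw [hxiU]; exact Or.inl rfl, ?_⟩
          show y0fun = _
          rw [setTwo_eq_swap _ _ _ (Ne.symm hij), hy0_def, Equiv.swap_comm]
    rw [Finset.sum_boole, hfilter]
    rw [Finset.card_insert_of_notMem (by
      simp only [Finset.mem_singleton]
      intro h
      exact hij (congrArg Prod.fst h)), Finset.card_singleton]
    norm_num
  have hm0 : (m : ℝ) ≠ 0 := by
    have : (0 : ℝ) < m := by exact_mod_cast lt_of_lt_of_le (by norm_num) hm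
    linarith
  refine ⟨y0, hy0mem, ?_, ?_⟩
  · unfold transP
    rw [if_neg (T_ne_of_udList_ne x y0 hudne0)]
    rw [stepWeight_eq_move3 α β x y0 hudne0, hsum2]
    field_simp
  · intro y hymem hypos
    have hyud := mem_Uset_iff.mp hymem
    have hudney : udList x.1.1 ≠ udList y.1.1 := by
      rw [hx, hyud]
      intro h
      exact hs (Subtype.ext (List.ofFn_inj.mp h))
    rw [show transP α β m x.1 y.1 = stepWeight α β x.1.1 y.1.1 from by
        unfold transP; rw [if_neg (T_ne_of_udList_ne x y hudney)],
      stepWeight_eq_move3 α β x y hudney] at hypos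
    have hSpos : 0 < ∑ p : Fin m × Fin m,
        (if isUD (x.1.1 p.1) ∧ isUD (x.1.1 p.2) ∧
            y.1.1 = setTwo x.1.1 p.1 p.2 (x.1.1 p.2) (x.1.1 p.1) then (1 : ℝ) else 0) := by
      by_contra hcon
      push_neg at hcon
      have : (∑ p : Fin m × Fin m,
          (if isUD (x.1.1 p.1) ∧ isUD (x.1.1 p.2) ∧
              y.1.1 = setTwo x.1.1 p.1 p.2 (x.1.1 p.2) (x.1.1 p.1) then (1 : ℝ) else 0)) = 0 :=
        le_antisymm hcon (Finset.sum_nonneg fun p _ => by positivity)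
      rw [this, mul_zero] at hypos
      exact lt_irrefl 0 hypos
    obtain ⟨p, _, hp⟩ := Finset.exists_ne_zero_of_sum_ne_zero (ne_of_gt hSpos)
    have hcond : isUD (x.1.1 p.1) ∧ isUD (x.1.1 p.2) ∧
        y.1.1 = setTwo x.1.1 p.1 p.2 (x.1.1 p.2) (x.1.1 p.1) := by
      by_contra hcon
      rw [if_neg hcon] at hp
      exact hp rfl
    have := (hkey y hyud p hcond).1
    apply Subtype.ext
    apply Subtype.ext
    exact this

lemma sum_gibbsKQ_Uset (α β : ℝ) {m k : ℕ} (hmk : 2 * k ≤ m)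
    (q : Fin (m - 2 * k) → Bool) (s : Dyck k) :
    ∑ x ∈ Uset m k q s, gibbsKQ α β m k q x = 1 / (Fintype.card (Dyck k) : ℝ) := by
  rw [Finset.sum_congr rfl (fun x _ => gibbsKQ_eq hmk x), Finset.sum_const, card_Uset,
    nsmul_eq_mul, card_TkqType]
  have hD : (0 : ℝ) < (Fintype.card (Dyck k) : ℝ) := by exact_mod_cast Fintype.card_pos
  have hC : (0 : ℝ) < (m.choose (2 * k) : ℝ) := by exact_mod_cast Nat.choose_pos hmk
  push_cast
  field_simp

lemma transP_nonneg_off (α β : ℝ) {m k : ℕ} {q : Fin (m - 2 * k) → Bool}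
    (x y : TkqType m k q) (hudne : udList x.1.1 ≠ udList y.1.1) :
    0 ≤ transP α β m x.1 y.1 := by
  unfold transP
  rw [if_neg (T_ne_of_udList_ne x y hudne), stepWeight_eq_move3 α β x y hudne]
  apply mul_nonneg (by positivity)
  apply Finset.sum_nonneg
  intro p _
  split <;> norm_num

lemma udne_of_mem_Usets {m k : ℕ} {q : Fin (m - 2 * k) → Bool} {s1 s2 : Dyck k}
    (hne : s1 ≠ s2) {x y : TkqType m k q} (hx : x ∈ Uset m k q s1) (hy : y ∈ Uset m k q s2) :
    udList x.1.1 ≠ udList y.1.1 := by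
  rw [mem_Uset_iff.mp hx, mem_Uset_iff.mp hy]
  intro h
  exact hne (Subtype.ext (List.ofFn_inj.mp h))


/-- For all real `α, β`, every `m ≥ 2`, every
`0 ≤ k ≤ ⌊m/2⌋` and every `q ∈ {H,I}^{m-2k}`:
(i) `|U_{k,q,s}| = binom(m, 2k)` for every `s ∈ 𝔇_k`;
(ii) whenever distinct `s₁, s₂ ∈ 𝔇_k` are related by a transposition move,
every `x ∈ U_{k,q,s₁}` has exactly one `y ∈ U_{k,q,s₂}` with `P(x,y) > 0`, and
the projection chain `M̄_{k,q}` satisfies `P̄_{k,q}(s₁,s₂) = 1/(4m²)`;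
(iii) `P̄_{k,q}(s₁,s₂) = 0` for distinct `s₁, s₂` not related by a
transposition move, and the stationary distribution of `M̄_{k,q}` is uniform
on `𝔇_k`. -/
theorem motzkin_skeleton_projection (α β : ℝ) (m : ℕ) (hm : 2 ≤ m) (k : ℕ)
    (hk : k ≤ m / 2) (q : Fin (m - 2 * k) → Bool) :
    (∀ s : Dyck k, (Uset m k q s).card = m.choose (2 * k)) ∧
    (∀ s1 s2 : Dyck k, s1 ≠ s2 → TranspMove s1 s2 →
      (∀ x ∈ Uset m k q s1,
        ∃! y : TkqType m k q, y ∈ Uset m k q s2 ∧ 0 < transP α β m x.1 y.1) ∧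
      projPkq α β m k q s1 s2 = 1 / (4 * (m : ℝ) ^ 2)) ∧
    (∀ s1 s2 : Dyck k, s1 ≠ s2 → ¬ TranspMove s1 s2 →
      projPkq α β m k q s1 s2 = 0) ∧
    (∀ s : Dyck k,
      ∑ x ∈ Uset m k q s, gibbsKQ α β m k q x = 1 / (Fintype.card (Dyck k) : ℝ)) := by
  have hmk : 2 * k ≤ m := by omega
  have hmpos : (0 : ℝ) < (m : ℝ) := by exact_mod_cast lt_of_lt_of_le (by norm_num) hm
  have h4m : (0 : ℝ) < 4 * (m : ℝ) ^ 2 := by positivity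
  refine ⟨fun s => card_Uset q s, ?_, ?_, fun s => sum_gibbsKQ_Uset α β hmk q s⟩
  · intro s1 s2 hne ht
    constructor
    · intro x hx
      obtain ⟨y0, hy0mem, hy0val, hy0uniq⟩ :=
        move3_construct α β hm x s1 s2 (mem_Uset_iff.mp hx) hne ht
      refine ⟨y0, ⟨hy0mem, by rw [hy0val]; exact div_pos one_pos h4m⟩, ?_⟩
      rintro y ⟨hymem, hypos⟩
      exact hy0uniq y hymem hypos
    · unfold projPkq
      have hS := sum_gibbsKQ_Uset α β hmk q s1
      have hD : (0 : ℝ) < (Fintype.card (Dyck k) : ℝ) := by exact_mod_cast Fintype.card_pos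
      have hInner : ∀ x ∈ Uset m k q s1,
          (∑ y ∈ Uset m k q s2, gibbsKQ α β m k q x * restPkq α β m k q x y)
            = gibbsKQ α β m k q x * (1 / (4 * (m : ℝ) ^ 2)) := by
        intro x hx
        obtain ⟨y0, hy0mem, hy0val, hy0uniq⟩ :=
          move3_construct α β hm x s1 s2 (mem_Uset_iff.mp hx) hne ht
        rw [Finset.sum_eq_single_of_mem y0 hy0mem ?_]
        · have hxny0 : x ≠ y0 := by
            intro h
            exact udne_of_mem_Usets hne hx hy0mem (by rw [h])
          unfold restPkq
          rw [if_neg hxny0, hy0val]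
        · intro y hymem hyne
          have hxny : x ≠ y := by
            intro h
            exact udne_of_mem_Usets hne hx hymem (by rw [h])
          unfold restPkq
          rw [if_neg hxny]
          have hnn := transP_nonneg_off α β x y (udne_of_mem_Usets hne hx hymem)
          rcases lt_or_eq_of_le hnn with hpos | hzero
          · exact absurd (hy0uniq y hymem hpos) hyne
          · rw [← hzero, mul_zero]
      rw [Finset.sum_congr rfl hInner, ← Finset.sum_mul, hS]
      field_simp
  · intro s1 s2 hne hnt
    unfold projPkq
    have hzero : ∀ x ∈ Uset m k q s1,
        (∑ y ∈ Uset m k q s2, gibbsKQ α β m k q x * restPkq α β m k q x y) = 0 := by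
      intro x hx
      apply Finset.sum_eq_zero
      intro y hy
      have hxny : x ≠ y := by
        intro h
        exact udne_of_mem_Usets hne hx hy (by rw [h])
      unfold restPkq
      rw [if_neg hxny,
        move3_none α β x y s1 s2 (mem_Uset_iff.mp hx) (mem_Uset_iff.mp hy) hne hnt, mul_zero]
    rw [Finset.sum_congr rfl hzero, Finset.sum_const, smul_zero, mul_zero]
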